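/- Let f : ℝⁿ × ℝᵐ → ℝ be such that the map (x,y) ↦ ∇_y f(x,y) is differentiable, let F : ℝⁿ × ℝᵐ → ℝ be differentiable, let y : ℝⁿ → ℝᵐ be differentiable at x̄ with ∇_y f(x, y(x)) = 0 for all x in a neighborhood of x̄, and suppose the Fréchet derivative H_{yy} at y(x̄) of y ↦ ∇_y f(x̄,y) is invertible; let H_{xy} be the Fréchet derivative at x̄ of x ↦ ∇_y f(x, y(x̄)). Then the reduced objective 𝓕(x) := F(x, y(x)) is differentiable at x̄ and its gradient (the hypergradient) is ∇𝓕(x̄) = ∇_x F(x̄, y(x̄)) − H_{xy}* (H_{yy}⁻¹ ∇_y F(x̄, y(x̄))), where H_{xy}* denotes the adjoint of H_{xy}. -/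

import Mathlib

open InnerProductSpace Set RealInnerProductSpace

variable {E : Type*} [NormedAddCommGroup E] [InnerProductSpace ℝ E] [CompleteSpace E]

lemma aux_diff (f : E → ℝ) (p : E) (h : gradient f p ≠ 0) :
    HasFDerivAt f (toDual ℝ E (gradient f p)) p := by
  by_cases hd : DifferentiableAt ℝ f p
  · exact hasGradientAt_iff_hasFDerivAt.mp hd.hasGradientAt
  · exact absurd (gradient_eq_zero_of_not_differentiableAt hd) h

set_option maxHeartbeats 2000000 in
lemma aux_symm (f : E → ℝ) (G : E → E) (hG : ∀ z, G z = gradient f z) (y₀ : E)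
    (hG0 : G y₀ = 0) (H : E ≃L[ℝ] E)
    (hH : HasFDerivAt G (H : E →L[ℝ] E) y₀) (v w : E) :
    ⟪(H : E →L[ℝ] E) v, w⟫ = ⟪(H : E →L[ℝ] E) w, v⟫ := by
  by_cases hv : v = 0
  · simp [hv]
  by_cases hw : ∃ c : ℝ, w = c • v
  · obtain ⟨c, rfl⟩ := hw
    simp only [map_smul, ContinuousLinearMap.coe_smul', Pi.smul_apply,
      real_inner_smul_left, real_inner_smul_right]
  have hind : ∀ a b : ℝ, a ≠ 0 → a • v + b • w ≠ 0 := by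
    intro a b ha h
    by_cases hb : b = 0
    · apply hv
      have : a • v = 0 := by simpa [hb] using h
      simpa [ha] using (smul_eq_zero.mp this)
    · apply hw
      refine ⟨-(a/b), ?_⟩
      have : b • w = -(a • v) := by
        rw [eq_neg_iff_add_eq_zero, add_comm]; exact h
      have := congrArg (fun z => b⁻¹ • z) this
      simp only [smul_smul, inv_mul_cancel₀ hb, one_smul, smul_neg] at this
      rw [this, div_eq_mul_inv, mul_comm a b⁻¹, neg_smul]
  -- constants
  set K : ℝ := ‖v‖ + ‖w‖ + 1 with hKdef
  have hK : 0 < K := by positivity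
  set c : ℝ := ‖(H.symm : E →L[ℝ] E)‖ + 1 with hcdef
  have hc : 0 < c := by positivity
  have hlow : ∀ u : E, ‖u‖ ≤ c * ‖(H : E →L[ℝ] E) u‖ := by
    intro u
    calc ‖u‖ = ‖H.symm ((H : E →L[ℝ] E) u)‖ := by simp
    _ ≤ ‖(H.symm : E →L[ℝ] E)‖ * ‖(H : E →L[ℝ] E) u‖ :=
        (H.symm : E →L[ℝ] E).le_opNorm _
    _ ≤ c * ‖(H : E →L[ℝ] E) u‖ := by
        apply mul_le_mul_of_nonneg_right _ (norm_nonneg _)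
        rw [hcdef]; linarith
  have hlo : (fun z => G z - G y₀ - (H : E →L[ℝ] E) (z - y₀)) =o[nhds y₀]
      fun z => z - y₀ := hH.isLittleO
  obtain ⟨r₀, hr₀, hball⟩ : ∃ r > 0, ∀ z ∈ Metric.ball y₀ r,
      ‖G z - (H : E →L[ℝ] E) (z - y₀)‖ ≤ (1 / (2 * c)) * ‖z - y₀‖ := by
    have := hlo.def (by positivity : (0:ℝ) < 1 / (2 * c))
    rw [Metric.eventually_nhds_iff_ball] at this
    obtain ⟨r, hr, h⟩ := this
    exact ⟨r, hr, fun z hz => by simpa [hG0] using h z hz⟩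
  have hne : ∀ z ∈ Metric.ball y₀ r₀, z ≠ y₀ → G z ≠ 0 := by
    intro z hz hzne h0
    have h1 : ‖z - y₀‖ ≤ c * ‖(H : E →L[ℝ] E) (z - y₀)‖ := hlow _
    have h2 := hball z hz
    rw [h0, zero_sub, norm_neg] at h2
    have h3 : 0 < ‖z - y₀‖ := by
      rw [norm_pos_iff, sub_ne_zero]; exact hzne
    have h4 : c * ‖(H : E →L[ℝ] E) (z - y₀)‖ ≤ c * ((1 / (2 * c)) * ‖z - y₀‖) :=
      mul_le_mul_of_nonneg_left h2 hc.le
    have h5 : c * ((1 / (2 * c)) * ‖z - y₀‖) = ‖z - y₀‖ / 2 := by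
      field_simp
    nlinarith
  -- main epsilon argument
  have hmain : ∀ ε > (0:ℝ),
      |⟪(H : E →L[ℝ] E) v, w⟫ - ⟪(H : E →L[ℝ] E) w, v⟫| ≤ ε * (8 * K ^ 2) := by
    intro ε hε
    obtain ⟨δ, hδpos, hδ⟩ : ∃ δ > 0, ∀ z ∈ Metric.ball y₀ δ,
        ‖G z - (H : E →L[ℝ] E) (z - y₀)‖ ≤ ε * ‖z - y₀‖ := by
      have := hlo.def hε
      rw [Metric.eventually_nhds_iff_ball] at this
      obtain ⟨r, hr, h⟩ := this
      exact ⟨r, hr, fun z hz => by simpa [hG0] using h z hz⟩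
    set ρ : ℝ := min r₀ δ with hρdef
    have hρ : 0 < ρ := lt_min hr₀ hδpos
    set t : ℝ := ρ / (4 * K) with htdef
    have ht : 0 < t := by positivity
    set P : ℝ → ℝ → E := fun a b => y₀ + (a • v + b • w) with hPdef
    have hPsub : ∀ a b : ℝ, P a b - y₀ = a • v + b • w := by
      intro a b; simp [hPdef]
    have hnorm : ∀ a b : ℝ, t ≤ a → a ≤ 2*t → 0 ≤ b → b ≤ t →
        ‖a • v + b • w‖ ≤ 2 * t * K := by
      intro a b ha1 ha2 hb1 hb2
      have h1 : ‖a • v + b • w‖ ≤ a * ‖v‖ + b * ‖w‖ := by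
        calc ‖a • v + b • w‖ ≤ ‖a • v‖ + ‖b • w‖ := norm_add_le _ _
        _ = |a| * ‖v‖ + |b| * ‖w‖ := by rw [norm_smul, norm_smul]; simp
        _ = a * ‖v‖ + b * ‖w‖ := by
            rw [abs_of_nonneg (le_trans ht.le ha1), abs_of_nonneg hb1]
      have hv0 := norm_nonneg v
      have hw0 := norm_nonneg w
      nlinarith
    have hlt : ∀ a b : ℝ, t ≤ a → a ≤ 2*t → 0 ≤ b → b ≤ t →
        ‖a • v + b • w‖ < ρ := by
      intro a b ha1 ha2 hb1 hb2
      have := hnorm a b ha1 ha2 hb1 hb2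
      have h2 : 2 * t * K = ρ / 2 := by
        rw [htdef]; field_simp; ring
      calc ‖a • v + b • w‖ ≤ 2 * t * K := this
      _ = ρ / 2 := h2
      _ < ρ := half_lt_self hρ
    have key : ∀ a b : ℝ, t ≤ a → a ≤ 2*t → 0 ≤ b → b ≤ t →
        HasFDerivAt f (toDual ℝ E (G (P a b))) (P a b) ∧
        ‖G (P a b) - (H : E →L[ℝ] E) (a • v + b • w)‖ ≤ ε * (2 * t * K) := by
      intro a b ha1 ha2 hb1 hb2
      have hltρ := hlt a b ha1 ha2 hb1 hb2
      have hmem : ∀ r' : ℝ, ρ ≤ r' → P a b ∈ Metric.ball y₀ r' := by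
        intro r' hr'
        rw [Metric.mem_ball, dist_eq_norm, hPsub]
        exact lt_of_lt_of_le hltρ hr'
      have hPne : P a b ≠ y₀ := by
        intro h
        have : a • v + b • w = 0 := by
          have := hPsub a b; rw [h, sub_self] at this; exact this.symm
        exact hind a b (by linarith : a ≠ 0) this
      have hGne : G (P a b) ≠ 0 := hne _ (hmem r₀ (min_le_left _ _)) hPne
      constructor
      · rw [hG]
        exact aux_diff f _ (by rw [← hG]; exact hGne)
      · have := hδ (P a b) (hmem δ (min_le_right _ _))
        rw [hPsub] at this
        calc ‖G (P a b) - (H : E →L[ℝ] E) (a • v + b • w)‖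
            ≤ ε * ‖a • v + b • w‖ := this
        _ ≤ ε * (2 * t * K) := by
            exact mul_le_mul_of_nonneg_left (hnorm a b ha1 ha2 hb1 hb2) hε.le
    -- curves along the two directions
    have hcurve_v : ∀ (b s : ℝ), HasDerivAt (fun s' => P (t + s') b) v s := by
      intro b s
      have h1 : HasDerivAt (fun s' : ℝ => t + s') 1 s := (hasDerivAt_id s).const_add t
      have h2 := h1.smul_const v
      rw [one_smul] at h2
      simpa [hPdef] using (h2.add_const (b • w)).const_add y₀
    have hcurve_w : ∀ (a σ : ℝ), HasDerivAt (fun σ' => P a σ') w σ := by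
      intro a σ
      have h1 := (hasDerivAt_id σ).smul_const w
      rw [one_smul] at h1
      simpa [hPdef] using (h1.const_add (a • v)).const_add y₀
    -- first pass: v direction
    set g1 : ℝ → ℝ := fun s => f (P (t+s) t) - f (P (t+s) 0)
      - s * ⟪(H : E →L[ℝ] E) (t • w), v⟫ with hg1def
    set d1 : ℝ → ℝ := fun s => ⟪G (P (t+s) t), v⟫ - ⟪G (P (t+s) 0), v⟫
      - ⟪(H : E →L[ℝ] E) (t • w), v⟫ with hd1def
    have hg1 : ∀ s ∈ Icc (0:ℝ) t, HasDerivAt g1 (d1 s) s := by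
      intro s hs
      obtain ⟨hs1, hs2⟩ := hs
      have hA := ((key (t+s) t (by linarith) (by linarith) ht.le le_rfl).1).comp_hasDerivAt
        s (hcurve_v t s)
      have hB := ((key (t+s) 0 (by linarith) (by linarith) le_rfl ht.le).1).comp_hasDerivAt
        s (hcurve_v 0 s)
      have hC : HasDerivAt (fun s' : ℝ => s' * ⟪(H : E →L[ℝ] E) (t • w), v⟫)
          (⟪(H : E →L[ℝ] E) (t • w), v⟫) s := hasDerivAt_mul_const _
      have := (hA.sub hB).sub hC
      simpa [hg1def, hd1def, Function.comp_def, toDual_apply_apply, Pi.sub_def] using this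
    have hd1bound : ∀ s ∈ Ico (0:ℝ) t, ‖d1 s‖ ≤ ε * (4 * t * K^2) := by
      intro s hs
      obtain ⟨hs1, hs2⟩ := hs
      have e1 := (key (t+s) t (by linarith) (by linarith) ht.le le_rfl).2
      have e2 := (key (t+s) 0 (by linarith) (by linarith) le_rfl ht.le).2
      have hrw : d1 s = ⟪G (P (t+s) t) - (H : E →L[ℝ] E) ((t+s) • v + t • w), v⟫
          - ⟪G (P (t+s) 0) - (H : E →L[ℝ] E) ((t+s) • v + (0:ℝ) • w), v⟫ := by
        simp only [hd1def, inner_sub_left, map_add, inner_add_left, zero_smul,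
          map_zero, add_zero]
        ring
      have i1 := abs_real_inner_le_norm
        (G (P (t+s) t) - (H : E →L[ℝ] E) ((t+s) • v + t • w)) v
      have i2 := abs_real_inner_le_norm
        (G (P (t+s) 0) - (H : E →L[ℝ] E) ((t+s) • v + (0:ℝ) • w)) v
      have hvK : ‖v‖ ≤ K := by rw [hKdef]; have := norm_nonneg w; linarith
      have hn1 : ‖G (P (t+s) t) - (H : E →L[ℝ] E) ((t+s) • v + t • w)‖ * ‖v‖
          ≤ ε * (2*t*K) * K := by
        apply mul_le_mul e1 hvK (norm_nonneg _)
        positivity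
      have hn2 : ‖G (P (t+s) 0) - (H : E →L[ℝ] E) ((t+s) • v + (0:ℝ) • w)‖ * ‖v‖
          ≤ ε * (2*t*K) * K := by
        apply mul_le_mul e2 hvK (norm_nonneg _)
        positivity
      rw [Real.norm_eq_abs, hrw]
      calc |_ - _| ≤ _ + _ := abs_sub _ _
      _ ≤ ε * (2*t*K) * K + ε * (2*t*K) * K := add_le_add (i1.trans hn1) (i2.trans hn2)
      _ = ε * (4 * t * K^2) := by ring
    have mv1 := norm_image_sub_le_of_norm_deriv_le_segment'
      (fun s hs => (hg1 s hs).hasDerivWithinAt) hd1bound t (right_mem_Icc.mpr ht.le)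
    -- second pass: w direction
    set g2 : ℝ → ℝ := fun σ => f (P (t+t) σ) - f (P t σ)
      - σ * ⟪(H : E →L[ℝ] E) (t • v), w⟫ with hg2def
    set d2 : ℝ → ℝ := fun σ => ⟪G (P (t+t) σ), w⟫ - ⟪G (P t σ), w⟫
      - ⟪(H : E →L[ℝ] E) (t • v), w⟫ with hd2def
    have hg2 : ∀ σ ∈ Icc (0:ℝ) t, HasDerivAt g2 (d2 σ) σ := by
      intro σ hs
      obtain ⟨hs1, hs2⟩ := hs
      have hA := ((key (t+t) σ (by linarith) (by linarith) hs1 hs2).1).comp_hasDerivAt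
        σ (hcurve_w (t+t) σ)
      have hB := ((key t σ le_rfl (by linarith) hs1 hs2).1).comp_hasDerivAt
        σ (hcurve_w t σ)
      have hC : HasDerivAt (fun σ' : ℝ => σ' * ⟪(H : E →L[ℝ] E) (t • v), w⟫)
          (⟪(H : E →L[ℝ] E) (t • v), w⟫) σ := hasDerivAt_mul_const _
      have := (hA.sub hB).sub hC
      simpa [hg2def, hd2def, Function.comp_def, toDual_apply_apply, Pi.sub_def] using this
    have hd2bound : ∀ σ ∈ Ico (0:ℝ) t, ‖d2 σ‖ ≤ ε * (4 * t * K^2) := by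
      intro σ hs
      obtain ⟨hs1, hs2⟩ := hs
      have e1 := (key (t+t) σ (by linarith) (by linarith) hs1 hs2.le).2
      have e2 := (key t σ le_rfl (by linarith) hs1 hs2.le).2
      have hrw : d2 σ = ⟪G (P (t+t) σ) - (H : E →L[ℝ] E) ((t+t) • v + σ • w), w⟫
          - ⟪G (P t σ) - (H : E →L[ℝ] E) (t • v + σ • w), w⟫ := by
        simp only [hd2def, inner_sub_left, add_smul, map_add, inner_add_left]
        ring
      have i1 := abs_real_inner_le_norm
        (G (P (t+t) σ) - (H : E →L[ℝ] E) ((t+t) • v + σ • w)) w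
      have i2 := abs_real_inner_le_norm
        (G (P t σ) - (H : E →L[ℝ] E) (t • v + σ • w)) w
      have hwK : ‖w‖ ≤ K := by rw [hKdef]; have := norm_nonneg v; linarith
      have hn1 : ‖G (P (t+t) σ) - (H : E →L[ℝ] E) ((t+t) • v + σ • w)‖ * ‖w‖
          ≤ ε * (2*t*K) * K := by
        apply mul_le_mul e1 hwK (norm_nonneg _)
        positivity
      have hn2 : ‖G (P t σ) - (H : E →L[ℝ] E) (t • v + σ • w)‖ * ‖w‖
          ≤ ε * (2*t*K) * K := by
        apply mul_le_mul e2 hwK (norm_nonneg _)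
        positivity
      rw [Real.norm_eq_abs, hrw]
      calc |_ - _| ≤ _ + _ := abs_sub _ _
      _ ≤ ε * (2*t*K) * K + ε * (2*t*K) * K := add_le_add (i1.trans hn1) (i2.trans hn2)
      _ = ε * (4 * t * K^2) := by ring
    have mv2 := norm_image_sub_le_of_norm_deriv_le_segment'
      (fun σ hs => (hg2 σ hs).hasDerivWithinAt) hd2bound t (right_mem_Icc.mpr ht.le)
    -- combine
    have hg1val : g1 t - g1 0 = f (P (t+t) t) - f (P (t+t) 0) - f (P t t) + f (P t 0)
        - t * ⟪(H : E →L[ℝ] E) (t • w), v⟫ := by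
      simp only [hg1def, add_zero, zero_mul]
      ring
    have hg2val : g2 t - g2 0 = f (P (t+t) t) - f (P t t) - f (P (t+t) 0) + f (P t 0)
        - t * ⟪(H : E →L[ℝ] E) (t • v), w⟫ := by
      simp only [hg2def, zero_mul]
      ring
    have hdiff : (g1 t - g1 0) - (g2 t - g2 0)
        = t^2 * (⟪(H : E →L[ℝ] E) v, w⟫ - ⟪(H : E →L[ℝ] E) w, v⟫) := by
      rw [hg1val, hg2val]
      have hsm1 : ⟪(H : E →L[ℝ] E) (t • v), w⟫ = t * ⟪(H : E →L[ℝ] E) v, w⟫ := by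
        rw [map_smul]; exact real_inner_smul_left _ _ _
      have hsm2 : ⟪(H : E →L[ℝ] E) (t • w), v⟫ = t * ⟪(H : E →L[ℝ] E) w, v⟫ := by
        rw [map_smul]; exact real_inner_smul_left _ _ _
      rw [hsm1, hsm2]
      ring
    have habs2 : |t^2 * (⟪(H : E →L[ℝ] E) v, w⟫ - ⟪(H : E →L[ℝ] E) w, v⟫)|
        ≤ 2 * (ε * (4 * t * K^2) * t) := by
      rw [← hdiff]
      calc |(g1 t - g1 0) - (g2 t - g2 0)| ≤ |g1 t - g1 0| + |g2 t - g2 0| := abs_sub _ _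
      _ ≤ ε * (4 * t * K^2) * (t - 0) + ε * (4 * t * K^2) * (t - 0) := by
          refine add_le_add ?_ ?_
          · simpa [Real.norm_eq_abs] using mv1
          · simpa [Real.norm_eq_abs] using mv2
      _ = 2 * (ε * (4 * t * K^2) * t) := by ring
    rw [abs_mul, abs_of_pos (by positivity : (0:ℝ) < t^2)] at habs2
    have ht2 : (0:ℝ) < t^2 := by positivity
    have : t^2 * |⟪(H : E →L[ℝ] E) v, w⟫ - ⟪(H : E →L[ℝ] E) w, v⟫|
        ≤ t^2 * (ε * (8 * K^2)) := by
      calc t^2 * |⟪(H : E →L[ℝ] E) v, w⟫ - ⟪(H : E →L[ℝ] E) w, v⟫|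
          ≤ 2 * (ε * (4 * t * K^2) * t) := habs2
      _ = t^2 * (ε * (8 * K^2)) := by ring
    exact le_of_mul_le_mul_left this ht2
  -- conclude from hmain
  have habs : |⟪(H : E →L[ℝ] E) v, w⟫ - ⟪(H : E →L[ℝ] E) w, v⟫| ≤ 0 := by
    by_contra hcon
    push_neg at hcon
    have h8 : (0:ℝ) < 8 * K ^ 2 := by positivity
    have := hmain (|⟪(H : E →L[ℝ] E) v, w⟫ - ⟪(H : E →L[ℝ] E) w, v⟫| / (2 * (8 * K ^ 2)))
      (by positivity)
    have heq : |⟪(H : E →L[ℝ] E) v, w⟫ - ⟪(H : E →L[ℝ] E) w, v⟫| / (2 * (8 * K ^ 2))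
        * (8 * K ^ 2) = |⟪(H : E →L[ℝ] E) v, w⟫ - ⟪(H : E →L[ℝ] E) w, v⟫| / 2 := by
      field_simp
    rw [heq] at this
    linarith
  have := le_antisymm habs (abs_nonneg _)
  rwa [abs_eq_zero, sub_eq_zero] at this

set_option maxHeartbeats 1000000 in
/-- Hypergradient formula for the implicit-function reformulation of a bilevel
problem with unconstrained lower level:
∇𝓕(x̄) = ∇_x F(x̄,y(x̄)) − H_{xy}* (H_{yy}⁻¹ ∇_y F(x̄,y(x̄))). -/
theorem stmt_4 {n m : ℕ}
    (f : EuclideanSpace ℝ (Fin n) → EuclideanSpace ℝ (Fin m) → ℝ)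
    (F : EuclideanSpace ℝ (Fin n) → EuclideanSpace ℝ (Fin m) → ℝ)
    (hF : Differentiable ℝ
      (fun p : EuclideanSpace ℝ (Fin n) × EuclideanSpace ℝ (Fin m) => F p.1 p.2))
    (G : EuclideanSpace ℝ (Fin n) → EuclideanSpace ℝ (Fin m) → EuclideanSpace ℝ (Fin m))
    (hG : ∀ x y, G x y = gradient (fun y' => f x y') y)
    (hGdiff : Differentiable ℝ
      (fun p : EuclideanSpace ℝ (Fin n) × EuclideanSpace ℝ (Fin m) => G p.1 p.2))
    (y : EuclideanSpace ℝ (Fin n) → EuclideanSpace ℝ (Fin m))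
    (xb : EuclideanSpace ℝ (Fin n))
    (hy : DifferentiableAt ℝ y xb)
    (hstat : ∀ᶠ x in nhds xb, G x (y x) = 0)
    (Hyy : EuclideanSpace ℝ (Fin m) ≃L[ℝ] EuclideanSpace ℝ (Fin m))
    (hHyy : HasFDerivAt (fun y' => G xb y')
      (Hyy : EuclideanSpace ℝ (Fin m) →L[ℝ] EuclideanSpace ℝ (Fin m)) (y xb))
    (Hxy : EuclideanSpace ℝ (Fin n) →L[ℝ] EuclideanSpace ℝ (Fin m))
    (hHxy : HasFDerivAt (fun x => G x (y xb)) Hxy xb) :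
    DifferentiableAt ℝ (fun x => F x (y x)) xb ∧
      gradient (fun x => F x (y x)) xb =
        gradient (fun x => F x (y xb)) xb -
          (ContinuousLinearMap.adjoint Hxy)
            (Hyy.symm (gradient (fun y' => F xb y') (y xb))) := by
  classical
  have hGd : HasFDerivAt (fun p : _ × _ => G p.1 p.2)
      (fderiv ℝ (fun p : _ × _ => G p.1 p.2) (xb, y xb)) (xb, y xb) :=
    (hGdiff (xb, y xb)).hasFDerivAt
  set DG := fderiv ℝ (fun p : _ × _ => G p.1 p.2) (xb, y xb) with hDGdef
  have hinr : HasFDerivAt (fun y' => G xb y')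
      (DG.comp (ContinuousLinearMap.inr ℝ _ _)) (y xb) := by
    have := hGd.comp (y xb) (hasFDerivAt_prodMk_right xb (y xb))
    simpa [Function.comp_def] using this
  have hEyy : DG.comp (ContinuousLinearMap.inr ℝ _ _)
      = (Hyy : EuclideanSpace ℝ (Fin m) →L[ℝ] EuclideanSpace ℝ (Fin m)) :=
    hinr.unique hHyy
  have hinl : HasFDerivAt (fun x' => G x' (y xb))
      (DG.comp (ContinuousLinearMap.inl ℝ _ _)) xb := by
    have := hGd.comp (f := fun e => (e, y xb)) xb (hasFDerivAt_prodMk_left xb (y xb))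
    simpa [Function.comp_def] using this
  have hExy : DG.comp (ContinuousLinearMap.inl ℝ _ _) = Hxy := hinl.unique hHxy
  set Dy := fderiv ℝ y xb with hDydef
  have hyd : HasFDerivAt y Dy xb := hy.hasFDerivAt
  have hpair : HasFDerivAt (fun x' => (x', y x'))
      ((ContinuousLinearMap.id ℝ _).prod Dy) xb := HasFDerivAt.prodMk (hasFDerivAt_id xb) hyd
  have hGcomp : HasFDerivAt (fun x' => G x' (y x'))
      (DG.comp ((ContinuousLinearMap.id ℝ _).prod Dy)) xb := by
    have := hGd.comp xb hpair
    simpa [Function.comp_def] using this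
  have hzero : HasFDerivAt (fun x' => G x' (y x'))
      (0 : EuclideanSpace ℝ (Fin n) →L[ℝ] EuclideanSpace ℝ (Fin m)) xb := by
    have hconst : HasFDerivAt
        (fun _ : EuclideanSpace ℝ (Fin n) => (0 : EuclideanSpace ℝ (Fin m)))
        (0 : EuclideanSpace ℝ (Fin n) →L[ℝ] EuclideanSpace ℝ (Fin m)) xb :=
      hasFDerivAt_const _ _
    exact hconst.congr_of_eventuallyEq hstat
  have hDGzero : DG.comp ((ContinuousLinearMap.id ℝ _).prod Dy) = 0 :=
    hGcomp.unique hzero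
  have hDy : ∀ u, (Hyy : EuclideanSpace ℝ (Fin m) →L[ℝ] _) (Dy u) = -(Hxy u) := by
    intro u
    have h1 : DG (u, Dy u) = 0 := by
      have := ContinuousLinearMap.ext_iff.mp hDGzero u
      simpa using this
    have h2 : ((u, Dy u) : _ × _) = ((u, 0) : _ × _) + ((0, Dy u) : _ × _) := by
      simp
    have h3 : DG (u, Dy u) = DG (u, 0) + DG (0, Dy u) := by
      rw [h2, map_add]
    have h4 : DG (0, Dy u) = (Hyy : _ →L[ℝ] _) (Dy u) := by
      rw [← hEyy]; simp
    have h5 : DG (u, 0) = Hxy u := by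
      rw [← hExy]; simp
    rw [h4, h5, h1] at h3
    exact eq_neg_of_add_eq_zero_right h3.symm
  -- F side
  have hFd : HasFDerivAt (fun p : _ × _ => F p.1 p.2)
      (fderiv ℝ (fun p : _ × _ => F p.1 p.2) (xb, y xb)) (xb, y xb) :=
    (hF (xb, y xb)).hasFDerivAt
  set DF := fderiv ℝ (fun p : _ × _ => F p.1 p.2) (xb, y xb) with hDFdef
  have hFx : HasFDerivAt (fun x' => F x' (y xb))
      (DF.comp (ContinuousLinearMap.inl ℝ _ _)) xb := by
    have := hFd.comp (f := fun e => (e, y xb)) xb (hasFDerivAt_prodMk_left xb (y xb))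
    simpa [Function.comp_def] using this
  have hFy : HasFDerivAt (fun y' => F xb y')
      (DF.comp (ContinuousLinearMap.inr ℝ _ _)) (y xb) := by
    have := hFd.comp (y xb) (hasFDerivAt_prodMk_right xb (y xb))
    simpa [Function.comp_def] using this
  have hFcomp : HasFDerivAt (fun x' => F x' (y x'))
      (DF.comp ((ContinuousLinearMap.id ℝ _).prod Dy)) xb := by
    have := hFd.comp xb hpair
    simpa [Function.comp_def] using this
  refine ⟨hFcomp.differentiableAt, ?_⟩
  -- symmetry of the Hessian
  have sym := aux_symm (fun y' => f xb y') (fun y' => G xb y') (fun z => hG xb z)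
    (y xb) hstat.self_of_nhds Hyy hHyy
  -- gradients in terms of fderivs
  have hgrad1 : gradient (fun x' => F x' (y x')) xb
      = (InnerProductSpace.toDual ℝ _).symm (DF.comp ((ContinuousLinearMap.id ℝ _).prod Dy)) :=
    (hasFDerivAt_iff_hasGradientAt.mp hFcomp).gradient
  have hgrad2 : gradient (fun x' => F x' (y xb)) xb
      = (InnerProductSpace.toDual ℝ _).symm (DF.comp (ContinuousLinearMap.inl ℝ _ _)) :=
    (hasFDerivAt_iff_hasGradientAt.mp hFx).gradient
  have hgrad3 : gradient (fun y' => F xb y') (y xb)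
      = (InnerProductSpace.toDual ℝ _).symm (DF.comp (ContinuousLinearMap.inr ℝ _ _)) :=
    (hasFDerivAt_iff_hasGradientAt.mp hFy).gradient
  rw [hgrad1, hgrad2, hgrad3]
  set g3 := (InnerProductSpace.toDual ℝ _).symm (DF.comp (ContinuousLinearMap.inr ℝ _ _))
    with hg3def
  apply ext_inner_right ℝ
  intro u
  have hsymm_inv : ∀ p z : EuclideanSpace ℝ (Fin m),
      ⟪p, Hyy.symm z⟫_ℝ = ⟪Hyy.symm p, z⟫_ℝ := by
    intro p z
    calc ⟪p, Hyy.symm z⟫_ℝ = ⟪Hyy (Hyy.symm p), Hyy.symm z⟫_ℝ := by simp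
    _ = ⟪Hyy (Hyy.symm z), Hyy.symm p⟫_ℝ := by
        have := sym (Hyy.symm p) (Hyy.symm z)
        simpa using this
    _ = ⟪Hyy.symm p, z⟫_ℝ := by rw [real_inner_comm]; simp
  have hLHS : ⟪(InnerProductSpace.toDual ℝ _).symm
      (DF.comp ((ContinuousLinearMap.id ℝ _).prod Dy)), u⟫_ℝ
      = DF (u, 0) + ⟪g3, Dy u⟫_ℝ := by
    rw [InnerProductSpace.toDual_symm_apply]
    have h2 : ((u, Dy u) : _ × _) = ((u, 0) : _ × _) + ((0, Dy u) : _ × _) := by simp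
    have : DF (u, Dy u) = DF (u, 0) + DF (0, Dy u) := by rw [h2, map_add]
    simp only [ContinuousLinearMap.comp_apply, ContinuousLinearMap.prod_apply,
      ContinuousLinearMap.id_apply]
    rw [this, hg3def, InnerProductSpace.toDual_symm_apply]
    simp
  rw [inner_sub_left, hLHS]
  have hadj : ⟪(ContinuousLinearMap.adjoint Hxy) (Hyy.symm g3), u⟫_ℝ
      = ⟪Hyy.symm g3, Hxy u⟫_ℝ := ContinuousLinearMap.adjoint_inner_left _ _ _
  rw [hadj]
  have hgrad2u : ⟪(InnerProductSpace.toDual ℝ _).symm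
      (DF.comp (ContinuousLinearMap.inl ℝ _ _)), u⟫_ℝ = DF (u, 0) := by
    rw [InnerProductSpace.toDual_symm_apply]
    simp
  rw [hgrad2u]
  have hDyu : Dy u = -(Hyy.symm (Hxy u)) := by
    have := hDy u
    have h6 := congrArg (fun z => Hyy.symm z) this
    simpa using h6
  rw [hDyu]
  rw [inner_neg_right, hsymm_inv]
  ring
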